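/- Let n ≡ 1 (mod 4) be prime. The eigenvalues of the linearization of the Kuramoto model on the Paley graph P_n about the q-twisted state u_n^{(q)} are λ_x(q) = ((−1)^α · π/(n−1)) · ( G_n(q+x) − 2G_n(q) + G_n(q−x) ), x ∈ Z_n, where the arguments of G_n are taken modulo n (the formula expressing the linearization spectrum through Gauss sums, Section 6). -/

import Mathlib

noncomputable def ec (n : ℕ) (a : ZMod n) : ℂ :=
  Complex.exp (2 * Real.pi * Complex.I * a.val / n)

lemma ec_natCast (n : ℕ) [NeZero n] (m : ℕ) :
    ec n (m : ZMod n) = Complex.exp (2 * Real.pi * Complex.I * m / n) := by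
  have hn : (n : ℂ) ≠ 0 := Nat.cast_ne_zero.2 (NeZero.ne n)
  rw [ec, ZMod.val_natCast]
  have hm : (m : ℂ) = n * (m / n : ℕ) + (m % n : ℕ) := by
    exact_mod_cast congrArg (Nat.cast : ℕ → ℂ) (Nat.div_add_mod m n).symm
  have key : 2 * Real.pi * Complex.I * m / n
      = (((m / n : ℕ) : ℤ) : ℂ) * (2 * Real.pi * Complex.I)
        + 2 * Real.pi * Complex.I * (m % n : ℕ) / n := by
    rw [hm, Int.cast_natCast]; field_simp
  rw [key, Complex.exp_add, Complex.exp_int_mul_two_pi_mul_I, one_mul]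

lemma natCast_val_cast (n : ℕ) [NeZero n] (a : ZMod n) : ((a.val : ℕ) : ZMod n) = a := by
  simp [ZMod.natCast_val, ZMod.cast_id]

lemma ec_add (n : ℕ) [NeZero n] (a b : ZMod n) : ec n (a + b) = ec n a * ec n b := by
  have h : a + b = ((a.val + b.val : ℕ) : ZMod n) := by
    rw [Nat.cast_add, natCast_val_cast, natCast_val_cast]
  rw [h, ec_natCast, ec, ec, ← Complex.exp_add]
  congr 1
  push_cast
  ring

lemma ec_zero (n : ℕ) [NeZero n] : ec n 0 = 1 := by
  simp [ec, ZMod.val_zero]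

lemma ec_neg (n : ℕ) [NeZero n] (a : ZMod n) : ec n (-a) = (ec n a)⁻¹ := by
  have h : ec n a * ec n (-a) = 1 := by rw [← ec_add]; simp [ec_zero]
  exact eq_inv_of_mul_eq_one_left (by rw [mul_comm] at h; exact h)

lemma ec_mul_val (n : ℕ) [NeZero n] (a b : ZMod n) :
    ec n (a * b) = Complex.exp (2 * Real.pi * Complex.I * ((a.val * b.val : ℕ) : ℂ) / n) := by
  rw [show a * b = ((a.val * b.val : ℕ) : ZMod n) by push_cast [natCast_val_cast]; ring,
    ec_natCast]

lemma sum_Q_neg (n : ℕ) [NeZero n] (hp : n.Prime) (h4 : n % 4 = 1) (Q : Finset (ZMod n))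
    (hQ : ∀ a : ZMod n, a ∈ Q ↔ (a ≠ 0 ∧ ∃ x : ZMod n, x ^ 2 = a)) (m : ZMod n) :
    ∑ y ∈ Q, ec n (-(m * y)) = ∑ y ∈ Q, ec n (m * y) := by
  haveI : Fact n.Prime := ⟨hp⟩
  have hsq : IsSquare (-1 : ZMod n) := ZMod.exists_sq_eq_neg_one_iff.2 (by omega)
  obtain ⟨i, hi⟩ := hsq
  have hneg : ∀ y ∈ Q, -y ∈ Q := by
    intro y hy
    rw [hQ] at hy ⊢
    obtain ⟨hy0, x, hx⟩ := hy
    refine ⟨neg_ne_zero.2 hy0, i * x, ?_⟩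
    calc (i * x) ^ 2 = (i * i) * x ^ 2 := by ring
    _ = -y := by rw [← hi, hx]; ring
  refine Finset.sum_nbij' (fun y => -y) (fun y => -y) (fun y hy => hneg y hy)
    (fun y hy => hneg y hy) (fun y _ => neg_neg y) (fun y _ => neg_neg y) ?_
  intro y _
  rw [mul_neg]

lemma gauss_eq (n : ℕ) [NeZero n] (hp : n.Prime) (h4 : n % 4 = 1) (Q : Finset (ZMod n))
    (hQ : ∀ a : ZMod n, a ∈ Q ↔ (a ≠ 0 ∧ ∃ x : ZMod n, x ^ 2 = a)) (m : ZMod n) :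
    (∑ k ∈ Finset.range n, Complex.exp (2 * Real.pi * Complex.I * ((m.val * k ^ 2 : ℕ) : ℂ) / n))
      = 1 + 2 * ∑ y ∈ Q, ec n (m * y) := by
  haveI : Fact n.Prime := ⟨hp⟩
  have hn5 : 5 ≤ n := by have := hp.two_le; omega
  have two_ne : (2 : ZMod n) ≠ 0 := by
    intro h
    have h' : ((2 : ℕ) : ZMod n) = 0 := by exact_mod_cast h
    have hd : n ∣ 2 := (ZMod.natCast_eq_zero_iff 2 n).1 h'
    have := Nat.le_of_dvd (by norm_num) hd
    omega
  have hterm : ∀ k : ℕ, Complex.exp (2 * Real.pi * Complex.I * ((m.val * k ^ 2 : ℕ) : ℂ) / n)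
      = ec n (m * (k : ZMod n) ^ 2) := by
    intro k
    rw [← ec_natCast]
    congr 1
    push_cast [natCast_val_cast]
    ring
  rw [Finset.sum_congr rfl (fun k _ => hterm k)]
  have hsum1 : ∑ k ∈ Finset.range n, ec n (m * (k : ZMod n) ^ 2)
      = ∑ a : ZMod n, ec n (m * a ^ 2) := by
    refine Finset.sum_nbij' (fun k => (k : ZMod n)) (fun a => a.val)
      (fun k _ => Finset.mem_univ _) (fun a _ => Finset.mem_range.2 (ZMod.val_lt a))
      (fun k hk => ?_) (fun a _ => natCast_val_cast n a) (fun k _ => rfl)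
    show ((k : ZMod n)).val = k
    rw [ZMod.val_natCast, Nat.mod_eq_of_lt (Finset.mem_range.1 hk)]
  rw [hsum1]
  have hsplit : ∑ a : ZMod n, ec n (m * a ^ 2)
      = (∑ a ∈ (Finset.univ : Finset (ZMod n)).erase 0, ec n (m * a ^ 2)) + 1 := by
    rw [← Finset.sum_erase_add _ _ (Finset.mem_univ (0 : ZMod n))]
    congr 1
    simp [ec_zero]
  rw [hsplit]
  have hmaps : ∀ a ∈ (Finset.univ : Finset (ZMod n)).erase 0, a ^ 2 ∈ Q := by
    intro a ha
    have ha0 : a ≠ 0 := (Finset.mem_erase.1 ha).1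
    exact (hQ _).2 ⟨pow_ne_zero 2 ha0, a, rfl⟩
  have hfw := Finset.sum_fiberwise_of_maps_to hmaps (fun a => ec n (m * a ^ 2))
  rw [← hfw]
  have hinner : ∀ y ∈ Q,
      (∑ a ∈ Finset.filter (fun a => a ^ 2 = y) ((Finset.univ : Finset (ZMod n)).erase 0),
        ec n (m * a ^ 2)) = 2 * ec n (m * y) := by
    intro y hy
    obtain ⟨hy0, b, hb⟩ := (hQ y).1 hy
    have hb0 : b ≠ 0 := by
      intro h; exact hy0 (by rw [← hb, h]; ring)
    have hbne : b ≠ -b := by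
      intro h
      have hbb : b + b = 0 := by nth_rewrite 1 [h]; exact neg_add_cancel b
      have h2 : (2 : ZMod n) * b = 0 := by rw [two_mul]; exact hbb
      rcases mul_eq_zero.1 h2 with h' | h'
      · exact two_ne h'
      · exact hb0 h'
    have hfib : Finset.filter (fun a => a ^ 2 = y) ((Finset.univ : Finset (ZMod n)).erase 0)
        = {b, -b} := by
      ext a
      simp only [Finset.mem_filter, Finset.mem_erase, Finset.mem_univ, Finset.mem_insert,
        Finset.mem_singleton, and_true, true_and]
      constructor
      · rintro ⟨ha0, ha⟩
        rw [← hb] at ha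
        exact sq_eq_sq_iff_eq_or_eq_neg.1 ha
      · rintro (rfl | rfl)
        · exact ⟨hb0, hb⟩
        · exact ⟨neg_ne_zero.2 hb0, by rw [← hb]; ring⟩
    rw [hfib]
    rw [Finset.sum_insert (by simpa using hbne), Finset.sum_singleton]
    rw [hb, show m * (-b) ^ 2 = m * b ^ 2 by ring, hb]
    ring
  rw [Finset.sum_congr rfl hinner, ← Finset.mul_sum]
  ring

/-- the eigenvalues of the linearization of the Kuramoto model on the
Paley graph `P_n` about the `q`-twisted state are expressed through Gauss sums:
`λ_x(q) = ((-1)^α π/(n-1)) (G_n(q+x) - 2 G_n(q) + G_n(q-x))`. -/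
theorem paley_linearization_eigenvalues_gauss_sums
    (n : ℕ) (hp : n.Prime) (h4 : n % 4 = 1) [NeZero n]
    (α : ℕ) (hα : α = 0 ∨ α = 1)
    (Q : Finset (ZMod n))
    (hQ : ∀ a : ZMod n, a ∈ Q ↔ (a ≠ 0 ∧ ∃ x : ZMod n, x ^ 2 = a))
    (hcard : (Q.card : ℝ) = ((n : ℝ) - 1) / 2)
    (deltaS : ZMod n → ZMod n → ℂ)
    (hdelta : ∀ q x : ZMod n, deltaS q x =
      if x ∈ Q then
        ((((-1 : ℝ) ^ α * 2 * Real.pi / Q.card) *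
          Real.cos (2 * Real.pi * ((q.val * x.val : ℕ) : ℝ) / n) : ℝ) : ℂ)
      else 0)
    (B : ZMod n → (ZMod n → ℂ) → (ZMod n → ℂ))
    (hB : ∀ (q : ZMod n) (η : ZMod n → ℂ) (x : ZMod n),
      B q η x = (∑ y : ZMod n, deltaS q y * η (x - y)) - (∑ y ∈ Q, deltaS q y) * η x)
    (e : ZMod n → ZMod n → ℂ)
    (he : ∀ x y : ZMod n,
      e x y = Complex.exp (2 * Real.pi * Complex.I * ((x.val * y.val : ℕ) : ℂ) / n))
    (G : ZMod n → ℂ)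
    (hG : ∀ x : ZMod n, G x = ∑ k ∈ Finset.range n,
      Complex.exp (2 * Real.pi * Complex.I * ((x.val * k ^ 2 : ℕ) : ℂ) / n)) :
    ∀ q x : ZMod n, B q (e x) =
      (((((-1 : ℝ) ^ α * Real.pi / ((n : ℝ) - 1)) : ℝ) : ℂ) *
        (G (q + x) - 2 * G q + G (q - x))) • e x := by
  intro q x
  haveI : Fact n.Prime := ⟨hp⟩
  have hn5 : 5 ≤ n := by have := hp.two_le; omega
  have hn1 : ((n : ℂ) - 1) ≠ 0 := by
    refine sub_ne_zero.2 ?_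
    rw [Ne, Nat.cast_eq_one]
    omega
  have hQcard : ((Q.card : ℕ) : ℂ) = ((n : ℂ) - 1) / 2 := by
    have := congrArg (Complex.ofReal) hcard
    push_cast at this
    linear_combination this
  have e_eq : ∀ a b : ZMod n, e a b = ec n (a * b) := by
    intro a b
    rw [he, ec_mul_val]
  have hG2 : ∀ m : ZMod n, G m = 1 + 2 * ∑ y ∈ Q, ec n (m * y) := by
    intro m
    rw [hG]
    exact gauss_eq n hp h4 Q hQ m
  have hcos : ∀ y : ZMod n,
      ((Real.cos (2 * Real.pi * ((q.val * y.val : ℕ) : ℝ) / n) : ℝ) : ℂ)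
        = (ec n (q * y) + ec n (-(q * y))) / 2 := by
    intro y
    rw [Complex.ofReal_cos, Complex.cos, ec_neg, ec_mul_val, ← Complex.exp_neg]
    congr 2
    · push_cast
      ring
    · push_cast
      ring
  funext z
  rw [hB]
  have h1 : ∑ y : ZMod n, deltaS q y * e x (z - y) = ∑ y ∈ Q, deltaS q y * e x (z - y) :=
    (Finset.sum_subset (Finset.subset_univ Q)
      (fun y _ hy => by rw [hdelta, if_neg hy, zero_mul])).symm
  rw [h1, Finset.sum_mul, ← Finset.sum_sub_distrib]
  set cC : ℂ := (((-1 : ℝ) ^ α * 2 * Real.pi / Q.card : ℝ) : ℂ) with hcC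
  have hterm : ∀ y ∈ Q, deltaS q y * e x (z - y) - deltaS q y * e x z
      = cC / 2 * ec n (x * z) *
        (ec n ((q - x) * y) + ec n (-((q + x) * y)) - ec n (q * y) - ec n (-(q * y))) := by
    intro y hy
    rw [hdelta, if_pos hy, Complex.ofReal_mul, hcos y, e_eq x (z - y), e_eq x z,
      show x * (z - y) = x * z + -(x * y) by ring, ec_add]
    have e1 : ec n (q * y) * ec n (-(x * y)) = ec n ((q - x) * y) := by
      rw [← ec_add]; congr 1; ring
    have e2 : ec n (-(q * y)) * ec n (-(x * y)) = ec n (-((q + x) * y)) := by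
      rw [← ec_add]; congr 1; ring
    rw [hcC]
    linear_combination (cC / 2 * ec n (x * z)) * e1 + (cC / 2 * ec n (x * z)) * e2
  rw [Finset.sum_congr rfl hterm, ← Finset.mul_sum]
  simp only [Finset.sum_sub_distrib, Finset.sum_add_distrib]
  rw [show (∑ y ∈ Q, ec n (-((q + x) * y))) = ∑ y ∈ Q, ec n ((q + x) * y) from
      sum_Q_neg n hp h4 Q hQ (q + x),
    show (∑ y ∈ Q, ec n (-(q * y))) = ∑ y ∈ Q, ec n (q * y) from sum_Q_neg n hp h4 Q hQ q]
  show _ = _ * e x z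
  rw [hG2 (q + x), hG2 q, hG2 (q - x), e_eq x z, hcC]
  set S1 : ℂ := ∑ y ∈ Q, ec n ((q + x) * y)
  set S2 : ℂ := ∑ y ∈ Q, ec n ((q - x) * y)
  set S0 : ℂ := ∑ y ∈ Q, ec n (q * y)
  push_cast
  rw [hQcard]
  field_simp
  ring
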